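/- (Antipode identity.) Let n ≥ 1 and w ∈ S_n. The polynomial 𝔖_w(x,t) − (−1)^{ℓ(w)} 𝔖_{w^{-1}}(t,x) lies in the ideal of ℚ[x_1,…,x_n,t_1,…,t_n] generated by the differences p(x_1,…,x_n) − p(t_1,…,t_n), as p ranges over all symmetric polynomials in n variables. Here 𝔖_{w^{-1}}(t,x) denotes the double Schubert polynomial of w^{-1} with the roles of the x-variables and t-variables exchanged. -/

import Mathlib

open MvPolynomial
open scoped Classical

/-- The Coxeter length of a permutation of `Fin n`, i.e. its number of inversions. -/
def permLen {n : ℕ} (w : Equiv.Perm (Fin n)) : ℕ :=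
  (Finset.univ.filter (fun p : Fin n × Fin n => p.1 < p.2 ∧ w p.2 < w p.1)).card

/-- The adjacent transposition `s_i` exchanging the `i`-th and `(i+1)`-th letters
(zero-indexed); junk value `1` if out of range. -/
def adjSwap (n : ℕ) (i : ℕ) : Equiv.Perm (Fin n) :=
  if h : i + 1 < n then Equiv.swap ⟨i, Nat.lt_of_succ_lt h⟩ ⟨i + 1, h⟩ else 1

/-- The longest element `w₀` of the symmetric group on `Fin n`, `i ↦ n - 1 - i`
(one-indexed: `i ↦ n + 1 - i`). -/
def w0 (n : ℕ) : Equiv.Perm (Fin n) := Fin.revPerm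

/-- The Demazure (divided difference) operator with respect to a pair of variables `i j`:
`f ↦ (f - swap(i,j)·f) / (Xᵢ - Xⱼ)`.  The difference is always divisible by `Xᵢ - Xⱼ`
(for `i ≠ j`), and the quotient is unique since the polynomial ring is a domain, so the
definition by choice below produces exactly this quotient. -/
noncomputable def demazure {σ : Type} [DecidableEq σ] (i j : σ)
    (f : MvPolynomial σ ℚ) : MvPolynomial σ ℚ :=
  if h : ∃ g, f - rename (Equiv.swap i j) f = (X i - X j) * g then h.choose else 0

/-- The Demazure operator `∂ᵢ` on `ℚ[x₀, …, x_{n-1}]` (zero-indexed). -/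
noncomputable def demAt (n : ℕ) (i : ℕ) :
    MvPolynomial (Fin n) ℚ → MvPolynomial (Fin n) ℚ :=
  if h : i + 1 < n then demazure ⟨i, Nat.lt_of_succ_lt h⟩ ⟨i + 1, h⟩ else fun _ => 0

/-- The composite Demazure operator `∂_{i₁} ∘ ⋯ ∘ ∂_{i_r}` along a word `l = [i₁, …, i_r]`. -/
noncomputable def demWord (n : ℕ) (l : List ℕ) :
    MvPolynomial (Fin n) ℚ → MvPolynomial (Fin n) ℚ :=
  l.foldr (fun i op => demAt n i ∘ op) id

/-- `l = [i₁, …, i_r]` is a reduced word for `w` if all letters are in range,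
`s_{i₁} ⋯ s_{i_r} = w`, and `r = ℓ(w)` is the number of inversions of `w`. -/
def IsReducedWord (n : ℕ) (w : Equiv.Perm (Fin n)) (l : List ℕ) : Prop :=
  (∀ i ∈ l, i + 1 < n) ∧ (l.map (adjSwap n)).prod = w ∧ l.length = permLen w

/-- The Demazure operator `∂_w`, defined along a chosen reduced word of `w`
(the result is independent of this choice). -/
noncomputable def demazureOf (n : ℕ) (w : Equiv.Perm (Fin n)) :
    MvPolynomial (Fin n) ℚ → MvPolynomial (Fin n) ℚ :=
  if h : ∃ l, IsReducedWord n w l then demWord n h.choose else fun _ => 0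

/-- The Demazure operator `∂ᵢˣ` acting on the `x`-variables (the left summand) of
`ℚ[x₁, …, xₙ, t₁, …, tₙ]`. -/
noncomputable def demAtX (n : ℕ) (i : ℕ) :
    MvPolynomial (Fin n ⊕ Fin n) ℚ → MvPolynomial (Fin n ⊕ Fin n) ℚ :=
  if h : i + 1 < n then
    demazure (Sum.inl ⟨i, Nat.lt_of_succ_lt h⟩) (Sum.inl ⟨i + 1, h⟩) else fun _ => 0

/-- Composite of `x`-variable Demazure operators along a word. -/
noncomputable def demWordX (n : ℕ) (l : List ℕ) :
    MvPolynomial (Fin n ⊕ Fin n) ℚ → MvPolynomial (Fin n ⊕ Fin n) ℚ :=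
  l.foldr (fun i op => demAtX n i ∘ op) id

/-- The Demazure operator `∂_wˣ` in the `x`-variables, along a chosen reduced word of `w`. -/
noncomputable def demazureOfX (n : ℕ) (w : Equiv.Perm (Fin n)) :
    MvPolynomial (Fin n ⊕ Fin n) ℚ → MvPolynomial (Fin n ⊕ Fin n) ℚ :=
  if h : ∃ l, IsReducedWord n w l then demWordX n h.choose else fun _ => 0

/-- The top product `∏_{i + j ≤ n} (xᵢ - tⱼ)` (one-indexed), i.e. the double Schubert
polynomial of the longest element. -/
noncomputable def schubProd (n : ℕ) : MvPolynomial (Fin n ⊕ Fin n) ℚ :=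
  ∏ p ∈ Finset.univ.filter (fun p : Fin n × Fin n => (p.1 : ℕ) + (p.2 : ℕ) + 2 ≤ n),
    (X (Sum.inl p.1) - X (Sum.inr p.2))

/-- The double Schubert polynomial `𝔖_w(x, t) = ∂ˣ_{w⁻¹w₀} (∏_{i+j≤n} (xᵢ - tⱼ))`. -/
noncomputable def schubert (n : ℕ) (w : Equiv.Perm (Fin n)) :
    MvPolynomial (Fin n ⊕ Fin n) ℚ :=
  demazureOfX n (w⁻¹ * w0 n) (schubProd n)

lemma Equiv.Perm.apply_inv_self {α : Type*} (f : Equiv.Perm α) (x : α) : f (f⁻¹ x) = x :=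
  f.apply_symm_apply x

lemma Equiv.Perm.inv_apply_self {α : Type*} (f : Equiv.Perm α) (x : α) : f⁻¹ (f x) = x :=
  f.symm_apply_apply x

section DemazureBasic

variable {σ : Type} [DecidableEq σ]

private noncomputable def psiMap (i j : σ) : MvPolynomial σ ℚ →ₐ[ℚ] MvPolynomial σ ℚ :=
  aeval (fun k => if k = j then (X i : MvPolynomial σ ℚ) else X k)

private lemma psiMap_rename_swap (i j : σ) (hij : i ≠ j) (f : MvPolynomial σ ℚ) :
    psiMap i j (rename (Equiv.swap i j) f) = psiMap i j f := by
  unfold psiMap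
  rw [aeval_rename]
  have hfun : ((fun k => if k = j then (X i : MvPolynomial σ ℚ) else X k) ∘ ⇑(Equiv.swap i j))
      = (fun k => if k = j then (X i : MvPolynomial σ ℚ) else X k) := by
    funext k
    rcases eq_or_ne k i with rfl | hki
    · simp [Equiv.swap_apply_left, hij]
    rcases eq_or_ne k j with rfl | hkj
    · simp [Equiv.swap_apply_right, Ne.symm hij]
    · simp [Function.comp, Equiv.swap_apply_of_ne_of_ne hki hkj, hkj]
  rw [hfun]

private lemma dvd_sub_psiMap (i j : σ) (f : MvPolynomial σ ℚ) :
    (X i - X j : MvPolynomial σ ℚ) ∣ f - psiMap i j f := by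
  refine MvPolynomial.induction_on (motive := fun f => (X i - X j : MvPolynomial σ ℚ) ∣ f - psiMap i j f)
    f (fun a => by simp [psiMap]) (fun p q hp hq => ?_) (fun p m ih => ?_)
  · show (X i - X j : MvPolynomial σ ℚ) ∣ p + q - psiMap i j (p + q)
    have h : p + q - psiMap i j (p + q) = (p - psiMap i j p) + (q - psiMap i j q) := by
      rw [map_add]; ring
    rw [h]; exact dvd_add hp hq
  · show (X i - X j : MvPolynomial σ ℚ) ∣ p * X m - psiMap i j (p * X m)
    have h : p * X m - psiMap i j (p * X m)
        = (p - psiMap i j p) * X m + psiMap i j p * (X m - psiMap i j (X m)) := by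
      rw [map_mul]; ring
    rw [h]
    refine dvd_add (Dvd.dvd.mul_right ih _) (Dvd.dvd.mul_left ?_ _)
    rcases eq_or_ne m j with rfl | hmj
    · have hX : psiMap i m (X m : MvPolynomial σ ℚ) = X i := by simp [psiMap]
      rw [hX]
      exact ⟨-1, by ring⟩
    · have hX : psiMap i j (X m : MvPolynomial σ ℚ) = X m := by simp [psiMap, hmj]
      simp [hX]

lemma demazure_exists (i j : σ) (hij : i ≠ j) (f : MvPolynomial σ ℚ) :
    ∃ g, f - rename (Equiv.swap i j) f = (X i - X j) * g := by
  obtain ⟨g, hg⟩ := dvd_sub (dvd_sub_psiMap i j f)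
    (((psiMap_rename_swap i j hij f) ▸ dvd_sub_psiMap i j (rename (Equiv.swap i j) f)) :
      (X i - X j : MvPolynomial σ ℚ) ∣ rename (Equiv.swap i j) f - psiMap i j f)
  exact ⟨g, by linear_combination hg⟩

lemma X_sub_X_ne_zero (i j : σ) (hij : i ≠ j) : (X i - X j : MvPolynomial σ ℚ) ≠ 0 := by
  intro h
  have hne : (Finsupp.single j 1 : σ →₀ ℕ) ≠ Finsupp.single i 1 := by
    intro hcontra
    rw [Finsupp.single_eq_single_iff] at hcontra
    rcases hcontra with (⟨rfl, -⟩ | ⟨h1, -⟩)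
    · exact hij rfl
    · exact one_ne_zero h1
  have h2 := congrArg (coeff (Finsupp.single i 1)) h
  rw [coeff_sub, coeff_X, coeff_zero, coeff_X', if_neg hne] at h2
  norm_num at h2

lemma demazure_spec (i j : σ) (hij : i ≠ j) (f : MvPolynomial σ ℚ) :
    f - rename (Equiv.swap i j) f = (X i - X j) * demazure i j f := by
  rw [demazure, dif_pos (demazure_exists i j hij f)]
  exact (demazure_exists i j hij f).choose_spec

lemma demazure_unique (i j : σ) (hij : i ≠ j) {f g : MvPolynomial σ ℚ}
    (h : f - rename (Equiv.swap i j) f = (X i - X j) * g) : demazure i j f = g :=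
  mul_left_cancel₀ (X_sub_X_ne_zero i j hij)
    ((demazure_spec i j hij f).symm.trans h)

lemma demazure_sub (i j : σ) (hij : i ≠ j) (f g : MvPolynomial σ ℚ) :
    demazure i j (f - g) = demazure i j f - demazure i j g := by
  refine demazure_unique i j hij ?_
  rw [map_sub]
  linear_combination (demazure_spec i j hij f) - (demazure_spec i j hij g)

lemma demazure_invariant (i j : σ) (hij : i ≠ j) (f : MvPolynomial σ ℚ)
    (h : rename (Equiv.swap i j) f = f) : demazure i j f = 0 :=
  demazure_unique i j hij (by rw [h]; ring)

lemma demazure_mul_invariant (i j : σ) (hij : i ≠ j) (f g : MvPolynomial σ ℚ)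
    (h : rename (Equiv.swap i j) f = f) :
    demazure i j (f * g) = f * demazure i j g := by
  refine demazure_unique i j hij ?_
  rw [map_mul, h]
  linear_combination f * (demazure_spec i j hij g)

lemma demazure_smul (i j : σ) (hij : i ≠ j) (q : ℚ) (f : MvPolynomial σ ℚ) :
    demazure i j (q • f) = q • demazure i j f := by
  rw [smul_eq_C_mul, smul_eq_C_mul]
  exact demazure_mul_invariant i j hij _ f (by simp)

lemma rename_demazure (e : Equiv.Perm σ) (i j : σ) (hij : i ≠ j) (f : MvPolynomial σ ℚ) :
    rename e (demazure i j f) = demazure (e i) (e j) (rename e f) := by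
  have heij : e i ≠ e j := fun h => hij (e.injective h)
  refine (demazure_unique (e i) (e j) heij ?_).symm
  have hcomp : rename (⇑(Equiv.swap (e i) (e j))) (rename (⇑e) f)
      = rename (⇑e) (rename (⇑(Equiv.swap i j)) f) := by
    rw [rename_rename, rename_rename]
    have hfun : (⇑(Equiv.swap (e i) (e j)) ∘ ⇑e) = (⇑e ∘ ⇑(Equiv.swap i j)) := by
      funext x
      simp [Equiv.swap_apply_apply e i j, Equiv.Perm.mul_apply]
    rw [hfun]
  rw [hcomp, ← map_sub, demazure_spec i j hij f, map_mul]
  rw [map_sub, rename_X, rename_X]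

lemma demazure_self_invariant (i j : σ) (hij : i ≠ j) (f : MvPolynomial σ ℚ) :
    rename (Equiv.swap i j) (demazure i j f) = demazure i j f := by
  have h := congrArg (rename (⇑(Equiv.swap i j))) (demazure_spec i j hij f)
  rw [map_sub, rename_rename, map_mul] at h
  have hswap : (⇑(Equiv.swap i j)) ∘ (⇑(Equiv.swap i j)) = id := by
    funext x; simp
  rw [hswap, rename_id, AlgHom.id_apply] at h
  have hXX : rename (⇑(Equiv.swap i j)) (X i - X j : MvPolynomial σ ℚ) = -(X i - X j) := by
    rw [map_sub, rename_X, rename_X, Equiv.swap_apply_left, Equiv.swap_apply_right]; ring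
  rw [hXX] at h
  refine mul_left_cancel₀ (X_sub_X_ne_zero i j hij) ?_
  linear_combination h + (demazure_spec i j hij f)

lemma demazure_swap_anti (i j : σ) (hij : i ≠ j) (f : MvPolynomial σ ℚ) :
    demazure j i f = -demazure i j f := by
  refine demazure_unique j i (Ne.symm hij) ?_
  rw [Equiv.swap_comm j i]
  linear_combination (demazure_spec i j hij f)

end DemazureBasic
section DemazureRelations

variable {σ : Type} [DecidableEq σ]

lemma demazure_comm_disjoint (i j k l : σ) (hij : i ≠ j) (hkl : k ≠ l)
    (hik : i ≠ k) (hil : i ≠ l) (hjk : j ≠ k) (hjl : j ≠ l) (f : MvPolynomial σ ℚ) :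
    demazure i j (demazure k l f) = demazure k l (demazure i j f) := by
  refine demazure_unique i j hij ?_
  have h1 : rename (Equiv.swap i j) (demazure k l f)
      = demazure k l (rename (Equiv.swap i j) f) := by
    rw [rename_demazure (Equiv.swap i j) k l hkl f,
        Equiv.swap_apply_of_ne_of_ne (Ne.symm hik) (Ne.symm hjk),
        Equiv.swap_apply_of_ne_of_ne (Ne.symm hil) (Ne.symm hjl)]
  rw [h1, ← demazure_sub k l hkl, demazure_spec i j hij f,
      demazure_mul_invariant k l hkl _ _ (by
        rw [map_sub, rename_X, rename_X,
          Equiv.swap_apply_of_ne_of_ne hik hil, Equiv.swap_apply_of_ne_of_ne hjk hjl])]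

private lemma swap_comp1 (p q r : σ) (hpq : p ≠ q) (hqr : q ≠ r) (hpr : p ≠ r) :
    ⇑(Equiv.swap p r) ∘ ⇑(Equiv.swap q r) = ⇑(Equiv.swap p q) ∘ ⇑(Equiv.swap p r) := by
  funext x
  simp only [Function.comp_apply, Equiv.swap_apply_def]
  split_ifs <;> simp_all

private lemma demazure_triple_formula (p q r : σ) (hpq : p ≠ q) (hqr : q ≠ r) (hpr : p ≠ r)
    (f : MvPolynomial σ ℚ) :
    (X p - X q) * ((X q - X r) * ((X p - X r) *
        demazure p q (demazure q r (demazure p q f))))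
      = f - rename (Equiv.swap p q) f - rename (Equiv.swap q r) f
          - rename (Equiv.swap p r) f
          + rename (Equiv.swap p r) (rename (Equiv.swap q r) f)
          + rename (Equiv.swap q r) (rename (Equiv.swap p r) f) := by
  have e1 := demazure_spec p q hpq (demazure q r (demazure p q f))
  have e2 : rename (Equiv.swap p q) (demazure q r (demazure p q f))
      = demazure p r (demazure p q f) := by
    rw [rename_demazure (Equiv.swap p q) q r hqr, Equiv.swap_apply_right,
      Equiv.swap_apply_of_ne_of_ne (Ne.symm hpr) (Ne.symm hqr),
      demazure_self_invariant p q hpq f]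
  have e3 := demazure_spec q r hqr (demazure p q f)
  have e4 := demazure_spec p r hpr (demazure p q f)
  have e5 : rename (Equiv.swap q r) (demazure p q f)
      = demazure p r (rename (Equiv.swap q r) f) := by
    rw [rename_demazure (Equiv.swap q r) p q hpq,
      Equiv.swap_apply_of_ne_of_ne hpq hpr, Equiv.swap_apply_left]
  have e6 : rename (Equiv.swap p r) (demazure p q f)
      = -demazure q r (rename (Equiv.swap p r) f) := by
    rw [rename_demazure (Equiv.swap p r) p q hpq, Equiv.swap_apply_left,
      Equiv.swap_apply_of_ne_of_ne (Ne.symm hpq) hqr,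
      demazure_swap_anti q r hqr]
  have e7 := demazure_spec p r hpr (rename (Equiv.swap q r) f)
  have e8 := demazure_spec q r hqr (rename (Equiv.swap p r) f)
  have e9 := demazure_spec p q hpq f
  linear_combination (-((X q - X r) * (X p - X r)))*e1 + (-((X q - X r) * (X p - X r)))*e2
    + (-(X p - X r))*e3 + (X q - X r)*e4 + (-(X p - X r))*e5 + (X q - X r)*e6
    + e7 + e8 + (-1 : MvPolynomial σ ℚ)*e9

private lemma demazure_triple_formula' (p q r : σ) (hpq : p ≠ q) (hqr : q ≠ r) (hpr : p ≠ r)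
    (f : MvPolynomial σ ℚ) :
    (X p - X q) * ((X q - X r) * ((X p - X r) *
        demazure q r (demazure p q (demazure q r f))))
      = f - rename (Equiv.swap p q) f - rename (Equiv.swap q r) f
          - rename (Equiv.swap p r) f
          + rename (Equiv.swap p r) (rename (Equiv.swap p q) f)
          + rename (Equiv.swap p q) (rename (Equiv.swap p r) f) := by
  have e1 := demazure_spec q r hqr (demazure p q (demazure q r f))
  have e2 : rename (Equiv.swap q r) (demazure p q (demazure q r f))
      = demazure p r (demazure q r f) := by
    rw [rename_demazure (Equiv.swap q r) p q hpq,
      Equiv.swap_apply_of_ne_of_ne hpq hpr, Equiv.swap_apply_left,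
      demazure_self_invariant q r hqr f]
  have e3 := demazure_spec p q hpq (demazure q r f)
  have e4 := demazure_spec p r hpr (demazure q r f)
  have e5 : rename (Equiv.swap p q) (demazure q r f)
      = demazure p r (rename (Equiv.swap p q) f) := by
    rw [rename_demazure (Equiv.swap p q) q r hqr, Equiv.swap_apply_right,
      Equiv.swap_apply_of_ne_of_ne (Ne.symm hpr) (Ne.symm hqr)]
  have e6 : rename (Equiv.swap p r) (demazure q r f)
      = -demazure p q (rename (Equiv.swap p r) f) := by
    rw [rename_demazure (Equiv.swap p r) q r hqr,
      Equiv.swap_apply_of_ne_of_ne (Ne.symm hpq) hqr, Equiv.swap_apply_right,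
      demazure_swap_anti p q hpq]
  have e7 := demazure_spec p r hpr (rename (Equiv.swap p q) f)
  have e8 := demazure_spec p q hpq (rename (Equiv.swap p r) f)
  have e9 := demazure_spec q r hqr f
  linear_combination (-((X p - X q) * (X p - X r)))*e1 + (-((X p - X q) * (X p - X r)))*e2
    + (-(X p - X r))*e3 + (X p - X q)*e4 + (-(X p - X r))*e5 + (X p - X q)*e6
    + e7 + e8 + (-1 : MvPolynomial σ ℚ)*e9

lemma demazure_braid (p q r : σ) (hpq : p ≠ q) (hqr : q ≠ r) (hpr : p ≠ r)
    (f : MvPolynomial σ ℚ) :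
    demazure p q (demazure q r (demazure p q f))
      = demazure q r (demazure p q (demazure q r f)) := by
  have hc1 : rename (Equiv.swap p r) (rename (Equiv.swap q r) f)
      = rename (Equiv.swap p q) (rename (Equiv.swap p r) f) := by
    rw [rename_rename, rename_rename, swap_comp1 p q r hpq hqr hpr]
  have hc2 : rename (Equiv.swap q r) (rename (Equiv.swap p r) f)
      = rename (Equiv.swap p r) (rename (Equiv.swap p q) f) := by
    have h0 := swap_comp1 r q p (Ne.symm hqr) (Ne.symm hpq) (Ne.symm hpr)
    rw [Equiv.swap_comm r p, Equiv.swap_comm q p, Equiv.swap_comm r q] at h0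
    rw [rename_rename, rename_rename, h0.symm]
  have habc : (X p - X q) * ((X q - X r) * ((X p - X r) : MvPolynomial σ ℚ)) ≠ 0 :=
    mul_ne_zero (X_sub_X_ne_zero p q hpq)
      (mul_ne_zero (X_sub_X_ne_zero q r hqr) (X_sub_X_ne_zero p r hpr))
  refine mul_left_cancel₀ habc ?_
  have h1 := demazure_triple_formula p q r hpq hqr hpr f
  have h2 := demazure_triple_formula' p q r hpq hqr hpr f
  linear_combination h1 - h2 + hc1 + hc2

end DemazureRelations
section PermComb

lemma adjSwap_eq {n i : ℕ} (h : i + 1 < n) :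
    adjSwap n i = Equiv.swap ⟨i, Nat.lt_of_succ_lt h⟩ ⟨i + 1, h⟩ := dif_pos h

lemma adjSwap_mul_self (n i : ℕ) : adjSwap n i * adjSwap n i = 1 := by
  unfold adjSwap
  split
  · exact Equiv.swap_mul_self _ _
  · exact one_mul 1

lemma adjSwap_mul_adjSwap_mul (n i : ℕ) (w : Equiv.Perm (Fin n)) :
    adjSwap n i * (adjSwap n i * w) = w := by
  rw [← mul_assoc, adjSwap_mul_self, one_mul]

lemma adjSwap_inv (n i : ℕ) : (adjSwap n i)⁻¹ = adjSwap n i :=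
  inv_eq_of_mul_eq_one_right (adjSwap_mul_self n i)

lemma permLen_one (n : ℕ) : permLen (1 : Equiv.Perm (Fin n)) = 0 := by
  rw [permLen, Finset.card_eq_zero, Finset.filter_eq_empty_iff]
  rintro p -
  rintro ⟨h1, h2⟩
  simp only [Equiv.Perm.one_apply] at h2
  exact absurd h2 (asymm h1)

private lemma swap_adj_lt {n i : ℕ} (h : i + 1 < n) {u v : Fin n}
    (huv : u < v)
    (hne : ¬(u = (⟨i, Nat.lt_of_succ_lt h⟩ : Fin n) ∧ v = (⟨i + 1, h⟩ : Fin n))) :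
    Equiv.swap (⟨i, Nat.lt_of_succ_lt h⟩ : Fin n) ⟨i + 1, h⟩ u
      < Equiv.swap (⟨i, Nat.lt_of_succ_lt h⟩ : Fin n) ⟨i + 1, h⟩ v := by
  have hab : (⟨i, Nat.lt_of_succ_lt h⟩ : Fin n) < ⟨i + 1, h⟩ := by
    show i < i + 1
    omega
  rcases eq_or_ne u ⟨i, Nat.lt_of_succ_lt h⟩ with rfl | hua
  · have hvb : v ≠ ⟨i + 1, h⟩ := fun hh => hne ⟨rfl, hh⟩
    rw [Equiv.swap_apply_left, Equiv.swap_apply_of_ne_of_ne huv.ne' hvb]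
    have h1 : (i : ℕ) < (v : ℕ) := huv
    have h2 : (v : ℕ) ≠ i + 1 := fun hh => hvb (Fin.ext hh)
    show i + 1 < (v : ℕ)
    omega
  rcases eq_or_ne u ⟨i + 1, h⟩ with rfl | hub
  · rw [Equiv.swap_apply_right, Equiv.swap_apply_of_ne_of_ne (hab.trans huv).ne' huv.ne']
    exact hab.trans huv
  · rw [Equiv.swap_apply_of_ne_of_ne hua hub]
    rcases eq_or_ne v ⟨i, Nat.lt_of_succ_lt h⟩ with rfl | hva
    · rw [Equiv.swap_apply_left]
      exact huv.trans hab
    rcases eq_or_ne v ⟨i + 1, h⟩ with rfl | hvb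
    · rw [Equiv.swap_apply_right]
      have h1 : (u : ℕ) < i + 1 := huv
      have h2 : (u : ℕ) ≠ i := fun hh => hua (Fin.ext hh)
      show (u : ℕ) < i
      omega
    · rw [Equiv.swap_apply_of_ne_of_ne hva hvb]
      exact huv

private lemma swap_adj_lt_iff {n i : ℕ} (h : i + 1 < n) {u v : Fin n}
    (hne1 : ¬(u = (⟨i, Nat.lt_of_succ_lt h⟩ : Fin n) ∧ v = (⟨i + 1, h⟩ : Fin n)))
    (hne2 : ¬(v = (⟨i, Nat.lt_of_succ_lt h⟩ : Fin n) ∧ u = (⟨i + 1, h⟩ : Fin n)))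
    (huv : u ≠ v) :
    (Equiv.swap (⟨i, Nat.lt_of_succ_lt h⟩ : Fin n) ⟨i + 1, h⟩ u
      < Equiv.swap (⟨i, Nat.lt_of_succ_lt h⟩ : Fin n) ⟨i + 1, h⟩ v ↔ u < v) := by
  constructor
  · intro hlt
    rcases lt_or_gt_of_ne huv with h1 | h1
    · exact h1
    · exact absurd (swap_adj_lt h h1 hne2) (asymm hlt)
  · intro h1
    exact swap_adj_lt h h1 hne1

lemma permLen_adjSwap_mul_of_lt {n i : ℕ} (h : i + 1 < n) (w : Equiv.Perm (Fin n))
    (hd : w⁻¹ ⟨i, Nat.lt_of_succ_lt h⟩ < w⁻¹ ⟨i + 1, h⟩) :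
    permLen (adjSwap n i * w) = permLen w + 1 := by
  set a : Fin n := ⟨i, Nat.lt_of_succ_lt h⟩ with ha
  set b : Fin n := ⟨i + 1, h⟩ with hb
  have hab : a < b := by
    show i < i + 1
    omega
  set P : Fin n × Fin n := (w⁻¹ a, w⁻¹ b) with hP
  have hsw : ∀ x, (adjSwap n i * w) x = Equiv.swap a b (w x) := by
    intro x; rw [adjSwap_eq h]; rfl
  have hPw : P ∉ Finset.univ.filter
      (fun p : Fin n × Fin n => p.1 < p.2 ∧ w p.2 < w p.1) := by
    simp only [Finset.mem_filter, Finset.mem_univ, true_and, hP,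
      Equiv.Perm.apply_inv_self, not_and]
    intro _
    exact asymm hab
  have hPsw : P ∈ Finset.univ.filter
      (fun p : Fin n × Fin n => p.1 < p.2 ∧ (adjSwap n i * w) p.2 < (adjSwap n i * w) p.1) := by
    simp only [Finset.mem_filter, Finset.mem_univ, true_and, hP, hsw,
      Equiv.Perm.apply_inv_self]
    exact ⟨hd, by rw [Equiv.swap_apply_left, Equiv.swap_apply_right]; exact hab⟩
  have hset : Finset.univ.filter
      (fun p : Fin n × Fin n => p.1 < p.2 ∧ (adjSwap n i * w) p.2 < (adjSwap n i * w) p.1)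
      = insert P (Finset.univ.filter
        (fun p : Fin n × Fin n => p.1 < p.2 ∧ w p.2 < w p.1)) := by
    ext p
    rw [Finset.mem_insert]
    by_cases hp : p = P
    · subst hp
      exact iff_of_true hPsw (Or.inl rfl)
    by_cases hq : p.1 = w⁻¹ b ∧ p.2 = w⁻¹ a
    · obtain ⟨h1, h2⟩ := hq
      have hnlt : ¬ p.1 < p.2 := by
        rw [h1, h2]; exact asymm hd
      simp only [Finset.mem_filter, Finset.mem_univ, true_and]
      constructor
      · rintro ⟨hc, -⟩; exact absurd hc hnlt
      · rintro (hc | ⟨hc, -⟩)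
        · exact absurd hc hp
        · exact absurd hc hnlt
    · have hne1 : ¬(w p.2 = a ∧ w p.1 = b) := by
        rintro ⟨h1, h2⟩
        exact hq ⟨by rw [← h2, Equiv.Perm.inv_apply_self],
          by rw [← h1, Equiv.Perm.inv_apply_self]⟩
      have hiff : p ∈ Finset.univ.filter
          (fun p : Fin n × Fin n => p.1 < p.2 ∧ (adjSwap n i * w) p.2 < (adjSwap n i * w) p.1)
          ↔ p ∈ Finset.univ.filter
            (fun p : Fin n × Fin n => p.1 < p.2 ∧ w p.2 < w p.1) := by
        simp only [Finset.mem_filter, Finset.mem_univ, true_and, hsw]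
        refine and_congr_right (fun h12 => ?_)
        have hne2 : ¬(w p.1 = a ∧ w p.2 = b) := by
          rintro ⟨h1, h2⟩
          exact hp (by
            rw [hP, ← h1, ← h2, Equiv.Perm.inv_apply_self, Equiv.Perm.inv_apply_self])
        exact swap_adj_lt_iff h hne1 hne2
          (fun hh => (h12.ne' : p.2 ≠ p.1) (w.injective hh))
      rw [hiff]
      simp [hp]
  rw [permLen, hset, Finset.card_insert_of_notMem hPw, permLen]

lemma permLen_adjSwap_mul_of_gt {n i : ℕ} (h : i + 1 < n) (w : Equiv.Perm (Fin n))
    (hd : w⁻¹ ⟨i + 1, h⟩ < w⁻¹ ⟨i, Nat.lt_of_succ_lt h⟩) :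
    permLen (adjSwap n i * w) + 1 = permLen w := by
  have hinv : ∀ x, (adjSwap n i * w)⁻¹ x = w⁻¹ (adjSwap n i x) := by
    intro x
    rw [mul_inv_rev, adjSwap_inv]
    rfl
  have hd' : (adjSwap n i * w)⁻¹ ⟨i, Nat.lt_of_succ_lt h⟩ < (adjSwap n i * w)⁻¹ ⟨i + 1, h⟩ := by
    rw [hinv, hinv, adjSwap_eq h, Equiv.swap_apply_left, Equiv.swap_apply_right]
    exact hd
  have := permLen_adjSwap_mul_of_lt h (adjSwap n i * w) hd'
  rw [adjSwap_mul_adjSwap_mul] at this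
  omega

lemma permLen_adjSwap_mul_lt_iff {n i : ℕ} (h : i + 1 < n) (w : Equiv.Perm (Fin n)) :
    permLen (adjSwap n i * w) < permLen w ↔ w⁻¹ ⟨i + 1, h⟩ < w⁻¹ ⟨i, Nat.lt_of_succ_lt h⟩ := by
  have hne : w⁻¹ ⟨i, Nat.lt_of_succ_lt h⟩ ≠ w⁻¹ ⟨i + 1, h⟩ := by
    intro hh
    have := w⁻¹.injective hh
    simp only [Fin.mk.injEq] at this
    omega
  rcases lt_or_gt_of_ne hne with h1 | h1
  · have := permLen_adjSwap_mul_of_lt h w h1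
    constructor
    · intro hc; omega
    · intro hc; exact absurd h1 (asymm hc)
  · have := permLen_adjSwap_mul_of_gt h w h1
    constructor
    · intro _; exact h1
    · intro _; omega

lemma permLen_adjSwap_mul_le (n i : ℕ) (w : Equiv.Perm (Fin n)) :
    permLen (adjSwap n i * w) ≤ permLen w + 1 := by
  by_cases h : i + 1 < n
  · have hne : w⁻¹ ⟨i, Nat.lt_of_succ_lt h⟩ ≠ w⁻¹ ⟨i + 1, h⟩ := by
      intro hh
      have := w⁻¹.injective hh
      simp only [Fin.mk.injEq] at this
      omega
    rcases lt_or_gt_of_ne hne with h1 | h1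
    · have := permLen_adjSwap_mul_of_lt h w h1; omega
    · have := permLen_adjSwap_mul_of_gt h w h1; omega
  · rw [show adjSwap n i = 1 from dif_neg h, one_mul]
    omega

lemma perm_eq_one_of_strictMono {n : ℕ} (w : Equiv.Perm (Fin n))
    (hsm : StrictMono ⇑w) : w = 1 := by
  have hsurj : Function.Surjective ⇑w := w.surjective
  set e := StrictMono.orderIsoOfSurjective ⇑w hsm hsurj with he
  ext x
  have h1 : (e x : ℕ) = (x : ℕ) := Fin.coe_orderIso_apply e x
  have h2 : e x = w x := by
    rw [he]
    rfl
  rw [h2] at h1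
  exact h1

lemma permLen_eq_zero {n : ℕ} (w : Equiv.Perm (Fin n)) (hw : permLen w = 0) : w = 1 := by
  rw [permLen, Finset.card_eq_zero, Finset.filter_eq_empty_iff] at hw
  refine perm_eq_one_of_strictMono w (fun u v huv => ?_)
  have h1 := hw (Finset.mem_univ (u, v))
  simp only [not_and] at h1
  have h2 : ¬ w v < w u := h1 huv
  have h3 : w u ≠ w v := fun hh => huv.ne (w.injective hh)
  exact lt_of_le_of_ne (le_of_not_gt h2) h3

lemma exists_left_descent {n : ℕ} (w : Equiv.Perm (Fin n)) (hw : w ≠ 1) :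
    ∃ (i : ℕ) (h : i + 1 < n), w⁻¹ ⟨i + 1, h⟩ < w⁻¹ ⟨i, Nat.lt_of_succ_lt h⟩ := by
  by_contra hcon
  push_neg at hcon
  apply hw
  have hadj : ∀ (j : ℕ) (hj : j + 1 < n),
      w⁻¹ ⟨j, Nat.lt_of_succ_lt hj⟩ < w⁻¹ ⟨j + 1, hj⟩ := by
    intro j hj
    have h1 := hcon j hj
    have h2 : w⁻¹ ⟨j, Nat.lt_of_succ_lt hj⟩ ≠ w⁻¹ ⟨j + 1, hj⟩ := by
      intro hh
      have := w⁻¹.injective hh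
      simp only [Fin.mk.injEq] at this
      omega
    exact lt_of_le_of_ne h1 h2
  have hkey : ∀ (d u : ℕ) (hu : u + d + 1 < n),
      w⁻¹ ⟨u, by omega⟩ < w⁻¹ ⟨u + d + 1, hu⟩ := by
    intro d
    induction d with
    | zero => intro u hu; exact hadj u hu
    | succ d ih =>
        intro u hu
        have h1 : u + d + 1 < n := by omega
        have h2 := ih u h1
        have h3 := hadj (u + d + 1) (by omega)
        refine h2.trans ?_
        have : (⟨u + d + 1 + 1, by omega⟩ : Fin n) = ⟨u + (d + 1) + 1, hu⟩ := by
          apply Fin.ext; simp; omega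
        rw [← this]
        exact h3
  have hsm : StrictMono ⇑w⁻¹ := by
    intro u v huv
    have h1 : (u : ℕ) < (v : ℕ) := huv
    have h2 : u = (⟨(u : ℕ), u.isLt⟩ : Fin n) := by apply Fin.ext; rfl
    have h3 : v = (⟨(u : ℕ) + ((v : ℕ) - (u : ℕ) - 1) + 1, by omega⟩ : Fin n) := by
      apply Fin.ext; simp; omega
    rw [h2, h3]
    exact hkey ((v : ℕ) - (u : ℕ) - 1) (u : ℕ) (by omega)
  have := perm_eq_one_of_strictMono w⁻¹ hsm
  rw [← inv_inv w, this, inv_one]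

lemma permLen_word_le {n : ℕ} (l : List ℕ) :
    permLen ((l.map (adjSwap n)).prod) ≤ l.length := by
  induction l with
  | nil => simp [permLen_one]
  | cons i l ih =>
      rw [List.map_cons, List.prod_cons, List.length_cons]
      calc permLen (adjSwap n i * (l.map (adjSwap n)).prod)
          ≤ permLen ((l.map (adjSwap n)).prod) + 1 := permLen_adjSwap_mul_le n i _
        _ ≤ l.length + 1 := by omega

lemma exists_reducedWord (n : ℕ) (w : Equiv.Perm (Fin n)) : ∃ l, IsReducedWord n w l := by
  suffices H : ∀ (k : ℕ) (w : Equiv.Perm (Fin n)), permLen w = k → ∃ l, IsReducedWord n w l from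
    H (permLen w) w rfl
  intro k
  induction k using Nat.strong_induction_on with
  | _ k ih =>
    intro w hw
    by_cases h1 : w = 1
    · exact ⟨[], fun i hi => absurd hi List.not_mem_nil, by simp [h1],
        by simp [h1, permLen_one]⟩
    · obtain ⟨i, h, hd⟩ := exists_left_descent w h1
      have hlt := permLen_adjSwap_mul_of_gt h w hd
      obtain ⟨l, hl1, hl2, hl3⟩ := ih (permLen (adjSwap n i * w)) (by omega)
        (adjSwap n i * w) rfl
      refine ⟨i :: l, ?_, ?_, ?_⟩
      · intro j hj
        rcases List.mem_cons.mp hj with rfl | hj2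
        · exact h
        · exact hl1 j hj2
      · rw [List.map_cons, List.prod_cons, hl2, adjSwap_mul_adjSwap_mul]
      · rw [List.length_cons, hl3]
        omega

lemma reducedWord_cons {n : ℕ} {w : Equiv.Perm (Fin n)} {i : ℕ} {l : List ℕ}
    (hred : IsReducedWord n w (i :: l)) :
    i + 1 < n ∧ IsReducedWord n (adjSwap n i * w) l
      ∧ permLen (adjSwap n i * w) + 1 = permLen w := by
  obtain ⟨hrange, hprod, hlen⟩ := hred
  have h : i + 1 < n := hrange i List.mem_cons_self
  rw [List.map_cons, List.prod_cons] at hprod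
  have hprod' : (l.map (adjSwap n)).prod = adjSwap n i * w := by
    rw [← hprod, adjSwap_mul_adjSwap_mul]
  rw [List.length_cons] at hlen
  have hle : permLen (adjSwap n i * w) ≤ l.length := by
    rw [← hprod']; exact permLen_word_le l
  have hlt : permLen (adjSwap n i * w) < permLen w := by omega
  have hd := (permLen_adjSwap_mul_lt_iff h w).mp hlt
  have heq := permLen_adjSwap_mul_of_gt h w hd
  exact ⟨h, ⟨fun j hj => hrange j (List.mem_cons_of_mem i hj), hprod', by omega⟩, heq⟩

private lemma swap_braid {α : Type*} [DecidableEq α] (a b c : α)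
    (hab : a ≠ b) (hbc : b ≠ c) (hac : a ≠ c) :
    Equiv.swap a b * Equiv.swap b c * Equiv.swap a b
      = Equiv.swap b c * Equiv.swap a b * Equiv.swap b c := by
  have k1 : Equiv.swap a b * Equiv.swap b c * Equiv.swap a b = Equiv.swap a c := by
    have h0 := Equiv.swap_apply_apply (Equiv.swap a b) b c
    rw [Equiv.swap_apply_right] at h0
    rw [Equiv.swap_apply_of_ne_of_ne (Ne.symm hac) (Ne.symm hbc)] at h0
    rw [h0, Equiv.swap_inv]
  have k2 : Equiv.swap b c * Equiv.swap a b * Equiv.swap b c = Equiv.swap a c := by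
    have h0 := Equiv.swap_apply_apply (Equiv.swap b c) a b
    rw [Equiv.swap_apply_left] at h0
    rw [Equiv.swap_apply_of_ne_of_ne hab hac] at h0
    rw [h0, Equiv.swap_inv]
  rw [k1, k2]

lemma adjSwap_braid {n i : ℕ} (h : i + 2 < n) :
    adjSwap n i * adjSwap n (i + 1) * adjSwap n i
      = adjSwap n (i + 1) * adjSwap n i * adjSwap n (i + 1) := by
  have h1 : i + 1 < n := by omega
  have h2 : i + 1 + 1 < n := by omega
  have e1 : adjSwap n i = Equiv.swap (⟨i, Nat.lt_of_succ_lt h1⟩ : Fin n) ⟨i + 1, h1⟩ :=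
    adjSwap_eq h1
  have e2 : adjSwap n (i + 1)
      = Equiv.swap (⟨i + 1, h1⟩ : Fin n) ⟨i + 1 + 1, h2⟩ := adjSwap_eq h2
  rw [e1, e2]
  exact swap_braid _ _ _ (by rw [Ne, Fin.mk.injEq]; omega)
    (by rw [Ne, Fin.mk.injEq]; omega) (by rw [Ne, Fin.mk.injEq]; omega)

end PermComb
section DemT

noncomputable def demAtT (n : ℕ) (i : ℕ) :
    MvPolynomial (Fin n ⊕ Fin n) ℚ → MvPolynomial (Fin n ⊕ Fin n) ℚ :=
  if h : i + 1 < n then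
    demazure (Sum.inr ⟨i, Nat.lt_of_succ_lt h⟩) (Sum.inr ⟨i + 1, h⟩) else fun _ => 0

noncomputable def demWordT (n : ℕ) (l : List ℕ) :
    MvPolynomial (Fin n ⊕ Fin n) ℚ → MvPolynomial (Fin n ⊕ Fin n) ℚ :=
  l.foldr (fun i op => demAtT n i ∘ op) id

lemma demAtT_eq {n i : ℕ} (h : i + 1 < n) :
    demAtT n i = demazure (Sum.inr ⟨i, Nat.lt_of_succ_lt h⟩) (Sum.inr ⟨i + 1, h⟩) :=
  dif_pos h

lemma demWordT_cons (n : ℕ) (i : ℕ) (l : List ℕ) :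
    demWordT n (i :: l) = demAtT n i ∘ demWordT n l := rfl

set_option maxHeartbeats 1000000 in
lemma demAtT_comm {n i j : ℕ} (hi : i + 1 < n) (hj : j + 1 < n)
    (hd : i + 2 ≤ j ∨ j + 2 ≤ i) (f : MvPolynomial (Fin n ⊕ Fin n) ℚ) :
    demAtT n i (demAtT n j f) = demAtT n j (demAtT n i f) := by
  rw [demAtT_eq hi, demAtT_eq hj]
  refine demazure_comm_disjoint _ _ _ _ ?_ ?_ ?_ ?_ ?_ ?_ f <;>
    (rw [Ne, Sum.inr.injEq, Fin.mk.injEq]; omega)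

set_option maxHeartbeats 1000000 in
lemma demAtT_braid {n i : ℕ} (h : i + 1 + 1 < n) (f : MvPolynomial (Fin n ⊕ Fin n) ℚ) :
    demAtT n i (demAtT n (i + 1) (demAtT n i f))
      = demAtT n (i + 1) (demAtT n i (demAtT n (i + 1) f)) := by
  have hi : i + 1 < n := Nat.lt_of_succ_lt h
  have hne1 : (Sum.inr (⟨i, Nat.lt_of_succ_lt hi⟩ : Fin n) : Fin n ⊕ Fin n)
      ≠ Sum.inr ⟨i + 1, hi⟩ := by rw [Ne, Sum.inr.injEq, Fin.mk.injEq]; omega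
  have hne2 : (Sum.inr (⟨i + 1, hi⟩ : Fin n) : Fin n ⊕ Fin n)
      ≠ Sum.inr ⟨i + 1 + 1, h⟩ := by rw [Ne, Sum.inr.injEq, Fin.mk.injEq]; omega
  have hne3 : (Sum.inr (⟨i, Nat.lt_of_succ_lt hi⟩ : Fin n) : Fin n ⊕ Fin n)
      ≠ Sum.inr ⟨i + 1 + 1, h⟩ := by rw [Ne, Sum.inr.injEq, Fin.mk.injEq]; omega
  have key := demazure_braid (Sum.inr ⟨i, Nat.lt_of_succ_lt hi⟩) (Sum.inr ⟨i + 1, hi⟩)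
    (Sum.inr ⟨i + 1 + 1, h⟩) hne1 hne2 hne3 f
  have e1 : demAtT n i
      = demazure (Sum.inr (⟨i, Nat.lt_of_succ_lt hi⟩ : Fin n)) (Sum.inr ⟨i + 1, hi⟩) :=
    demAtT_eq hi
  have e2 : demAtT n (i + 1)
      = demazure (Sum.inr (⟨i + 1, hi⟩ : Fin n)) (Sum.inr ⟨i + 1 + 1, h⟩) :=
    demAtT_eq h
  rw [e1, e2]
  exact key

private lemma swap_comm_disjoint {α : Type*} [DecidableEq α] (a b c d : α)
    (h1 : a ≠ c) (h2 : a ≠ d) (h3 : b ≠ c) (h4 : b ≠ d) :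
    Equiv.swap a b * Equiv.swap c d = Equiv.swap c d * Equiv.swap a b := by
  ext x
  simp only [Equiv.Perm.mul_apply, Equiv.swap_apply_def]
  split_ifs <;> simp_all

lemma adjSwap_comm {n i j : ℕ} (hi : i + 1 < n) (hj : j + 1 < n)
    (hd : i + 2 ≤ j ∨ j + 2 ≤ i) :
    adjSwap n i * adjSwap n j = adjSwap n j * adjSwap n i := by
  rw [adjSwap_eq hi, adjSwap_eq hj]
  refine swap_comm_disjoint _ _ _ _ ?_ ?_ ?_ ?_ <;> (rw [Ne, Fin.mk.injEq]; omega)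

lemma adjSwap_mul_inv_apply (n i : ℕ) (v : Equiv.Perm (Fin n)) (x : Fin n) :
    (adjSwap n i * v)⁻¹ x = v⁻¹ (adjSwap n i x) := by
  rw [mul_inv_rev, adjSwap_inv]
  rfl

lemma adjSwap_apply_fst {n i : ℕ} (h : i + 1 < n) :
    adjSwap n i ⟨i, Nat.lt_of_succ_lt h⟩ = ⟨i + 1, h⟩ := by
  rw [adjSwap_eq h, Equiv.swap_apply_left]

lemma adjSwap_apply_snd {n i : ℕ} (h : i + 1 < n) :
    adjSwap n i ⟨i + 1, h⟩ = ⟨i, Nat.lt_of_succ_lt h⟩ := by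
  rw [adjSwap_eq h, Equiv.swap_apply_right]

lemma adjSwap_apply_other {n i : ℕ} (h : i + 1 < n) (x : Fin n)
    (h1 : (x : ℕ) ≠ i) (h2 : (x : ℕ) ≠ i + 1) : adjSwap n i x = x := by
  rw [adjSwap_eq h, Equiv.swap_apply_of_ne_of_ne]
  · exact fun hh => h1 (by rw [hh])
  · exact fun hh => h2 (by rw [hh])

set_option maxHeartbeats 2000000 in
theorem demWordT_welldef {n : ℕ} (v : Equiv.Perm (Fin n)) (l l' : List ℕ)
    (hl : IsReducedWord n v l) (hl' : IsReducedWord n v l') :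
    demWordT n l = demWordT n l' := by
  suffices H : ∀ (k : ℕ) (v : Equiv.Perm (Fin n)) (l l' : List ℕ), permLen v = k →
      IsReducedWord n v l → IsReducedWord n v l' → demWordT n l = demWordT n l' from
    H (permLen v) v l l' rfl hl hl'
  clear hl hl' l l' v
  intro k
  induction k using Nat.strong_induction_on with
  | _ k ih =>
  intro v l l' hk hl hl'
  have braid_case : ∀ (i : ℕ) (a b : List ℕ), IsReducedWord n v (i :: a) →
      IsReducedWord n v ((i + 1) :: b) →
      demWordT n (i :: a) = demWordT n ((i + 1) :: b) := by
    intro i a b hA hB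
    obtain ⟨hi, hared, haL⟩ := reducedWord_cons hA
    obtain ⟨hj, hbred, hbL⟩ := reducedWord_cons hB
    have hdesci : v⁻¹ ⟨i + 1, hi⟩ < v⁻¹ ⟨i, Nat.lt_of_succ_lt hi⟩ :=
      (permLen_adjSwap_mul_lt_iff hi v).mp (by omega)
    have hdescj : v⁻¹ ⟨i + 1 + 1, hj⟩ < v⁻¹ ⟨i + 1, Nat.lt_of_succ_lt hj⟩ :=
      (permLen_adjSwap_mul_lt_iff hj v).mp (by omega)
    have hd2 : (adjSwap n i * v)⁻¹ ⟨i + 1 + 1, hj⟩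
        < (adjSwap n i * v)⁻¹ ⟨i + 1, Nat.lt_of_succ_lt hj⟩ := by
      rw [adjSwap_mul_inv_apply, adjSwap_mul_inv_apply,
        adjSwap_apply_other hi ⟨i + 1 + 1, hj⟩ (show i + 1 + 1 ≠ i by omega)
          (show i + 1 + 1 ≠ i + 1 by omega), adjSwap_apply_snd hi]
      exact hdescj.trans hdesci
    have hu2 := permLen_adjSwap_mul_of_gt hj _ hd2
    have hd3 : (adjSwap n (i + 1) * (adjSwap n i * v))⁻¹ ⟨i + 1, hi⟩
        < (adjSwap n (i + 1) * (adjSwap n i * v))⁻¹ ⟨i, Nat.lt_of_succ_lt hi⟩ := by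
      rw [adjSwap_mul_inv_apply, adjSwap_mul_inv_apply, adjSwap_mul_inv_apply,
        adjSwap_mul_inv_apply, adjSwap_apply_fst hj,
        adjSwap_apply_other hj ⟨i, Nat.lt_of_succ_lt hi⟩ (show i ≠ i + 1 by omega)
          (show i ≠ i + 1 + 1 by omega),
        adjSwap_apply_other hi ⟨i + 1 + 1, hj⟩ (show i + 1 + 1 ≠ i by omega)
          (show i + 1 + 1 ≠ i + 1 by omega),
        adjSwap_apply_fst hi]
      exact hdescj
    have hu3 := permLen_adjSwap_mul_of_gt hi _ hd3
    obtain ⟨c, hcrange, hcprod, hclen⟩ :=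
      exists_reducedWord n (adjSwap n i * (adjSwap n (i + 1) * (adjSwap n i * v)))
    have hb := adjSwap_braid (show i + 2 < n by omega)
    have hbraidu : adjSwap n i * (adjSwap n (i + 1) * (adjSwap n i * v))
        = adjSwap n (i + 1) * (adjSwap n i * (adjSwap n (i + 1) * v)) := by
      rw [← mul_assoc, ← mul_assoc, ← mul_assoc, ← mul_assoc]
      rw [show adjSwap n i * adjSwap n (i + 1) * adjSwap n i
          = adjSwap n (i + 1) * adjSwap n i * adjSwap n (i + 1) from hb]
    have hred1 : IsReducedWord n (adjSwap n i * v) ((i + 1) :: i :: c) := by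
      refine ⟨?_, ?_, ?_⟩
      · intro x hx
        rcases List.mem_cons.mp hx with rfl | hx2
        · exact hj
        rcases List.mem_cons.mp hx2 with rfl | hx3
        · exact hi
        · exact hcrange x hx3
      · rw [List.map_cons, List.map_cons, List.prod_cons, List.prod_cons, hcprod,
          adjSwap_mul_adjSwap_mul, adjSwap_mul_adjSwap_mul]
      · simp only [List.length_cons]
        omega
    have hred2 : IsReducedWord n (adjSwap n (i + 1) * v) (i :: (i + 1) :: c) := by
      refine ⟨?_, ?_, ?_⟩
      · intro x hx
        rcases List.mem_cons.mp hx with rfl | hx2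
        · exact hi
        rcases List.mem_cons.mp hx2 with rfl | hx3
        · exact hj
        · exact hcrange x hx3
      · rw [List.map_cons, List.map_cons, List.prod_cons, List.prod_cons, hcprod, hbraidu,
          adjSwap_mul_adjSwap_mul, adjSwap_mul_adjSwap_mul]
      · simp only [List.length_cons]
        omega
    have e1 : demWordT n a = demWordT n ((i + 1) :: i :: c) :=
      ih (permLen (adjSwap n i * v)) (by omega) (adjSwap n i * v) a _ rfl hared hred1
    have e2 : demWordT n b = demWordT n (i :: (i + 1) :: c) :=
      ih (permLen (adjSwap n (i + 1) * v)) (by omega) (adjSwap n (i + 1) * v) b _ rfl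
        hbred hred2
    rw [demWordT_cons, demWordT_cons, e1, e2]
    funext f
    exact demAtT_braid hj (demWordT n c f)
  match l, l' with
  | [], [] => rfl
  | [], (j :: b) =>
      exfalso
      have h1 := hl.2.2
      have h2 := hl'.2.2
      simp only [List.length_nil, List.length_cons] at h1 h2
      omega
  | (i :: a), [] =>
      exfalso
      have h1 := hl.2.2
      have h2 := hl'.2.2
      simp only [List.length_nil, List.length_cons] at h1 h2
      omega
  | (i :: a), (j :: b) =>
    by_cases hij : i = j
    · subst hij
      obtain ⟨hi, hared, haL⟩ := reducedWord_cons hl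
      obtain ⟨-, hbred, -⟩ := reducedWord_cons hl'
      rw [demWordT_cons, demWordT_cons,
        ih (permLen (adjSwap n i * v)) (by omega) (adjSwap n i * v) a b rfl hared hbred]
    · have hcase : j = i + 1 ∨ i = j + 1 ∨ (i + 2 ≤ j ∨ j + 2 ≤ i) := by omega
      rcases hcase with rfl | hcase2
      · exact braid_case i a b hl hl'
      rcases hcase2 with rfl | hd
      · exact (braid_case j b a hl' hl).symm
      · obtain ⟨hi, hared, haL⟩ := reducedWord_cons hl
        obtain ⟨hj, hbred, hbL⟩ := reducedWord_cons hl'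
        have hdescj : v⁻¹ ⟨j + 1, hj⟩ < v⁻¹ ⟨j, Nat.lt_of_succ_lt hj⟩ :=
          (permLen_adjSwap_mul_lt_iff hj v).mp (by omega)
        have hdj' : (adjSwap n i * v)⁻¹ ⟨j + 1, hj⟩
            < (adjSwap n i * v)⁻¹ ⟨j, Nat.lt_of_succ_lt hj⟩ := by
          rw [adjSwap_mul_inv_apply, adjSwap_mul_inv_apply,
            adjSwap_apply_other hi ⟨j + 1, hj⟩ (show j + 1 ≠ i by omega)
              (show j + 1 ≠ i + 1 by omega),
            adjSwap_apply_other hi ⟨j, Nat.lt_of_succ_lt hj⟩ (show j ≠ i by omega)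
              (show j ≠ i + 1 by omega)]
          exact hdescj
        have hu := permLen_adjSwap_mul_of_gt hj _ hdj'
        obtain ⟨c, hcrange, hcprod, hclen⟩ :=
          exists_reducedWord n (adjSwap n j * (adjSwap n i * v))
        have hred1 : IsReducedWord n (adjSwap n i * v) (j :: c) := by
          refine ⟨?_, ?_, ?_⟩
          · intro x hx
            rcases List.mem_cons.mp hx with rfl | hx2
            · exact hj
            · exact hcrange x hx2
          · rw [List.map_cons, List.prod_cons, hcprod, adjSwap_mul_adjSwap_mul]
          · simp only [List.length_cons]
            omega
        have hcomm : adjSwap n i * adjSwap n j = adjSwap n j * adjSwap n i :=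
          adjSwap_comm hi hj hd
        have hprod2 : adjSwap n i * (adjSwap n j * (adjSwap n i * v))
            = adjSwap n j * v := by
          rw [← mul_assoc, hcomm, mul_assoc, adjSwap_mul_adjSwap_mul]
        have hred2 : IsReducedWord n (adjSwap n j * v) (i :: c) := by
          refine ⟨?_, ?_, ?_⟩
          · intro x hx
            rcases List.mem_cons.mp hx with rfl | hx2
            · exact hi
            · exact hcrange x hx2
          · rw [List.map_cons, List.prod_cons, hcprod, hprod2]
          · simp only [List.length_cons]
            omega
        have e1 : demWordT n a = demWordT n (j :: c) :=
          ih (permLen (adjSwap n i * v)) (by omega) (adjSwap n i * v) a _ rfl hared hred1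
        have e2 : demWordT n b = demWordT n (i :: c) :=
          ih (permLen (adjSwap n j * v)) (by omega) (adjSwap n j * v) b _ rfl hbred hred2
        rw [demWordT_cons, demWordT_cons, e1, e2, demWordT_cons, demWordT_cons]
        funext f
        exact demAtT_comm hi hj hd (demWordT n c f)

end DemT
section Glue

lemma permLen_inv {n : ℕ} (w : Equiv.Perm (Fin n)) : permLen w⁻¹ = permLen w := by
  rw [permLen, permLen]
  apply Finset.card_bij' (fun p _ => ((w⁻¹ p.2 : Fin n), (w⁻¹ p.1 : Fin n)))
    (fun p _ => ((w p.2 : Fin n), (w p.1 : Fin n)))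
  · intro p hp
    simp only [Finset.mem_filter, Finset.mem_univ, true_and] at hp ⊢
    exact ⟨hp.2, by simp only [Equiv.Perm.apply_inv_self]; exact hp.1⟩
  · intro p hp
    simp only [Finset.mem_filter, Finset.mem_univ, true_and] at hp ⊢
    exact ⟨hp.2, by simp only [Equiv.Perm.inv_apply_self]; exact hp.1⟩
  · intro p hp
    simp only [Equiv.Perm.apply_inv_self]
  · intro p hp
    simp only [Equiv.Perm.inv_apply_self]

lemma w0_mul_w0 (n : ℕ) : w0 n * w0 n = 1 := by
  ext x
  simp [w0, Fin.rev_rev]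

lemma permLen_mul_w0_add {n : ℕ} (v : Equiv.Perm (Fin n)) :
    permLen (v * w0 n) + permLen v
      = (Finset.univ.filter (fun p : Fin n × Fin n => p.1 < p.2)).card := by
  have hsplit := Finset.card_filter_add_card_filter_not
    (s := Finset.univ.filter (fun p : Fin n × Fin n => p.1 < p.2))
    (p := fun p : Fin n × Fin n => v p.2 < v p.1)
  have hA : (Finset.univ.filter (fun p : Fin n × Fin n => p.1 < p.2)).filter
      (fun p => v p.2 < v p.1)
      = Finset.univ.filter (fun p : Fin n × Fin n => p.1 < p.2 ∧ v p.2 < v p.1) := by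
    rw [Finset.filter_filter]
  have hB : permLen (v * w0 n) = ((Finset.univ.filter
      (fun p : Fin n × Fin n => p.1 < p.2)).filter (fun p => ¬ v p.2 < v p.1)).card := by
    rw [permLen, Finset.filter_filter]
    apply Finset.card_bij' (fun (p : Fin n × Fin n) _ => ((p.2.rev : Fin n), (p.1.rev : Fin n)))
      (fun (p : Fin n × Fin n) _ => ((p.2.rev : Fin n), (p.1.rev : Fin n)))
    · intro p hp
      simp only [Finset.mem_filter, Finset.mem_univ, true_and] at hp ⊢
      obtain ⟨h1, h2⟩ := hp
      have hlt : p.2.rev < p.1.rev := by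
        rw [Fin.rev_lt_rev]
        exact h1
      refine ⟨hlt, ?_⟩
      have h3 : (v * w0 n) p.2 = v p.2.rev := rfl
      have h4 : (v * w0 n) p.1 = v p.1.rev := rfl
      rw [h3, h4] at h2
      exact asymm h2
    · intro p hp
      simp only [Finset.mem_filter, Finset.mem_univ, true_and] at hp ⊢
      obtain ⟨h1, h2⟩ := hp
      refine ⟨by rw [Fin.rev_lt_rev]; exact h1, ?_⟩
      have h3 : (v * w0 n) (p.1.rev) = v p.1.rev.rev := rfl
      have h4 : (v * w0 n) (p.2.rev) = v p.2.rev.rev := rfl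
      rw [h3, h4, Fin.rev_rev, Fin.rev_rev]
      have hne : v p.1 ≠ v p.2 := fun hh => h1.ne (v.injective hh)
      exact lt_of_le_of_ne (le_of_not_gt h2) hne
    · intro p hp
      simp [Fin.rev_rev]
    · intro p hp
      simp [Fin.rev_rev]
  rw [hB, permLen, ← hA]
  omega

lemma card_pairs_eq_card_schubSet (n : ℕ) :
    (Finset.univ.filter (fun p : Fin n × Fin n => p.1 < p.2)).card
      = (Finset.univ.filter
          (fun p : Fin n × Fin n => (p.1 : ℕ) + (p.2 : ℕ) + 2 ≤ n)).card := by
  apply Finset.card_bij' (fun (p : Fin n × Fin n) _ => ((p.1 : Fin n), (p.2.rev : Fin n)))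
    (fun (p : Fin n × Fin n) _ => ((p.1 : Fin n), (p.2.rev : Fin n)))
  · intro p hp
    simp only [Finset.mem_filter, Finset.mem_univ, true_and] at hp ⊢
    have h1 : (p.1 : ℕ) < (p.2 : ℕ) := hp
    have h2 : (p.2.rev : ℕ) = n - 1 - (p.2 : ℕ) := by
      rw [Fin.val_rev]
      omega
    have h3 : (p.2 : ℕ) < n := p.2.isLt
    omega
  · intro p hp
    simp only [Finset.mem_filter, Finset.mem_univ, true_and] at hp ⊢
    have h2 : (p.2.rev : ℕ) = n - 1 - (p.2 : ℕ) := by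
      rw [Fin.val_rev]
      omega
    have h3 : (p.2 : ℕ) < n := p.2.isLt
    show (p.1 : ℕ) < (p.2.rev : ℕ)
    omega
  · intro p hp
    simp [Fin.rev_rev]
  · intro p hp
    simp [Fin.rev_rev]

lemma w0_conj_adjSwap {n j : ℕ} (hj : j + 1 < n) :
    w0 n * adjSwap n j * w0 n = adjSwap n (n - 2 - j) := by
  have hj2 : n - 2 - j + 1 < n := by omega
  rw [adjSwap_eq hj, adjSwap_eq hj2]
  have hconj := Equiv.swap_apply_apply (w0 n) (⟨j, Nat.lt_of_succ_lt hj⟩ : Fin n) ⟨j + 1, hj⟩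
  have hw0inv : (w0 n)⁻¹ = w0 n := inv_eq_of_mul_eq_one_right (w0_mul_w0 n)
  rw [hw0inv] at hconj
  rw [← hconj]
  have ha : w0 n (⟨j, Nat.lt_of_succ_lt hj⟩ : Fin n) = ⟨n - 1 - j, by omega⟩ := by
    apply Fin.ext
    show ((⟨j, Nat.lt_of_succ_lt hj⟩ : Fin n).rev : ℕ) = n - 1 - j
    rw [Fin.val_rev]
    show n - (j + 1) = n - 1 - j
    omega
  have hb : w0 n (⟨j + 1, hj⟩ : Fin n) = ⟨n - 2 - j, by omega⟩ := by
    apply Fin.ext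
    show ((⟨j + 1, hj⟩ : Fin n).rev : ℕ) = n - 2 - j
    rw [Fin.val_rev]
    show n - (j + 1 + 1) = n - 2 - j
    omega
  have hswap_eq : (⟨n - 1 - j, by omega⟩ : Fin n) = ⟨n - 2 - j + 1, hj2⟩ :=
    Fin.ext (by show n - 1 - j = n - 2 - j + 1; omega)
  rw [ha, hb, hswap_eq, Equiv.swap_comm]

end Glue
section Transfer

private lemma swap_inl_apply {β : Type*} [DecidableEq β] (a b x : β) :
    Equiv.swap (Sum.inl a : β ⊕ β) (Sum.inl b) (Sum.inl x) = Sum.inl (Equiv.swap a b x) := by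
  rcases eq_or_ne x a with rfl | h1
  · rw [Equiv.swap_apply_left, Equiv.swap_apply_left]
  rcases eq_or_ne x b with rfl | h2
  · rw [Equiv.swap_apply_right, Equiv.swap_apply_right]
  · rw [Equiv.swap_apply_of_ne_of_ne (by simpa using h1) (by simpa using h2),
      Equiv.swap_apply_of_ne_of_ne h1 h2]

private lemma swap_inl_inr {β : Type*} [DecidableEq β] (a b y : β) :
    Equiv.swap (Sum.inl a : β ⊕ β) (Sum.inl b) (Sum.inr y) = Sum.inr y :=
  Equiv.swap_apply_of_ne_of_ne (by simp) (by simp)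

private lemma swap_inr_apply {β : Type*} [DecidableEq β] (a b x : β) :
    Equiv.swap (Sum.inr a : β ⊕ β) (Sum.inr b) (Sum.inr x) = Sum.inr (Equiv.swap a b x) := by
  rcases eq_or_ne x a with rfl | h1
  · rw [Equiv.swap_apply_left, Equiv.swap_apply_left]
  rcases eq_or_ne x b with rfl | h2
  · rw [Equiv.swap_apply_right, Equiv.swap_apply_right]
  · rw [Equiv.swap_apply_of_ne_of_ne (by simpa using h1) (by simpa using h2),
      Equiv.swap_apply_of_ne_of_ne h1 h2]

private lemma swap_inr_inl {β : Type*} [DecidableEq β] (a b y : β) :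
    Equiv.swap (Sum.inr a : β ⊕ β) (Sum.inr b) (Sum.inl y) = Sum.inl y :=
  Equiv.swap_apply_of_ne_of_ne (by simp) (by simp)

lemma demAtX_eq {n i : ℕ} (h : i + 1 < n) :
    demAtX n i = demazure (Sum.inl ⟨i, Nat.lt_of_succ_lt h⟩) (Sum.inl ⟨i + 1, h⟩) :=
  dif_pos h

lemma demWordX_cons (n : ℕ) (i : ℕ) (l : List ℕ) :
    demWordX n (i :: l) = demAtX n i ∘ demWordX n l := rfl

lemma demAtT_smul (n i : ℕ) (q : ℚ) (f : MvPolynomial (Fin n ⊕ Fin n) ℚ) :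
    demAtT n i (q • f) = q • demAtT n i f := by
  by_cases h : i + 1 < n
  · rw [demAtT_eq h]
    exact demazure_smul _ _ (by rw [Ne, Sum.inr.injEq, Fin.mk.injEq]; omega) q f
  · unfold demAtT
    rw [dif_neg h]
    simp

lemma demWordT_smul (n : ℕ) (l : List ℕ) (q : ℚ) (f : MvPolynomial (Fin n ⊕ Fin n) ℚ) :
    demWordT n l (q • f) = q • demWordT n l f := by
  induction l with
  | nil => rfl
  | cons i t ih =>
      rw [demWordT_cons]
      show demAtT n i (demWordT n t (q • f)) = q • demAtT n i (demWordT n t f)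
      rw [ih, demAtT_smul]

lemma demWordT_neg (n : ℕ) (l : List ℕ) (f : MvPolynomial (Fin n ⊕ Fin n) ℚ) :
    demWordT n l (-f) = - demWordT n l f := by
  rw [← neg_one_smul ℚ f, demWordT_smul, neg_one_smul]

lemma demWordT_append (n : ℕ) (l1 l2 : List ℕ) :
    demWordT n (l1 ++ l2) = demWordT n l1 ∘ demWordT n l2 := by
  induction l1 with
  | nil => rfl
  | cons i t ih => rw [List.cons_append, demWordT_cons, ih, demWordT_cons]; rfl

lemma demAtX_smul {n i : ℕ} (h : i + 1 < n) (q : ℚ) (f : MvPolynomial (Fin n ⊕ Fin n) ℚ) :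
    demAtX n i (q • f) = q • demAtX n i f := by
  rw [demAtX_eq h]
  exact demazure_smul _ _ (by rw [Ne, Sum.inl.injEq, Fin.mk.injEq]; omega) q f

lemma demAtX_demAtT_comm {n i j : ℕ} (hi : i + 1 < n) (hj : j + 1 < n)
    (f : MvPolynomial (Fin n ⊕ Fin n) ℚ) :
    demAtX n i (demAtT n j f) = demAtT n j (demAtX n i f) := by
  rw [demAtX_eq hi, demAtT_eq hj]
  exact demazure_comm_disjoint _ _ _ _
    (by rw [Ne, Sum.inl.injEq, Fin.mk.injEq]; omega)
    (by rw [Ne, Sum.inr.injEq, Fin.mk.injEq]; omega)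
    (by simp) (by simp) (by simp) (by simp) f

lemma demAtX_demWordT_comm {n i : ℕ} (hi : i + 1 < n) (L : List ℕ)
    (hL : ∀ j ∈ L, j + 1 < n) (f : MvPolynomial (Fin n ⊕ Fin n) ℚ) :
    demAtX n i (demWordT n L f) = demWordT n L (demAtX n i f) := by
  induction L with
  | nil => rfl
  | cons j t ih =>
      rw [demWordT_cons]
      show demAtX n i (demAtT n j (demWordT n t f)) = demAtT n j (demWordT n t (demAtX n i f))
      rw [demAtX_demAtT_comm hi (hL j List.mem_cons_self),
        ih (fun x hx => hL x (List.mem_cons_of_mem j hx))]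

lemma schubProd_factor_key {n i : ℕ} (h : i + 1 < n) :
    demAtX n i (schubProd n) = - demAtT n (n - 2 - i) (schubProd n) := by
  set m : ℕ := n - 2 - i with hm
  have hm1 : m + 1 < n := by omega
  set a : Fin n := ⟨i, Nat.lt_of_succ_lt h⟩ with ha
  set b : Fin n := ⟨i + 1, h⟩ with hb
  set c : Fin n := ⟨m, Nat.lt_of_succ_lt hm1⟩ with hc
  set d : Fin n := ⟨m + 1, hm1⟩ with hd
  have haval : (a : ℕ) = i := rfl
  have hbval : (b : ℕ) = i + 1 := rfl
  have hcval : (c : ℕ) = m := rfl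
  have hdval : (d : ℕ) = m + 1 := rfl
  set T : Finset (Fin n × Fin n) :=
    Finset.univ.filter (fun p : Fin n × Fin n => (p.1 : ℕ) + (p.2 : ℕ) + 2 ≤ n) with hT
  have he0 : (a, c) ∈ T := by
    rw [hT, Finset.mem_filter]
    exact ⟨Finset.mem_univ _, by rw [haval, hcval]; omega⟩
  set S : MvPolynomial (Fin n ⊕ Fin n) ℚ :=
    ∏ p ∈ T.erase (a, c), (X (Sum.inl p.1) - X (Sum.inr p.2)) with hS
  have hfact : schubProd n = S * (X (Sum.inl a) - X (Sum.inr c)) := by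
    rw [schubProd, ← hT, ← Finset.mul_prod_erase T _ he0, ← hS, mul_comm]
  have hab' : (Sum.inl a : Fin n ⊕ Fin n) ≠ Sum.inl b := by
    rw [Ne, Sum.inl.injEq, ha, hb, Fin.mk.injEq]; omega
  have hcd' : (Sum.inr c : Fin n ⊕ Fin n) ≠ Sum.inr d := by
    rw [Ne, Sum.inr.injEq, hc, hd, Fin.mk.injEq]; omega
  have hmemX : ∀ p : Fin n × Fin n, p ∈ T.erase (a, c) →
      ((Equiv.swap a b p.1 : Fin n), p.2) ∈ T.erase (a, c) := by
    intro p hp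
    rw [Finset.mem_erase, hT, Finset.mem_filter] at hp
    obtain ⟨hne, -, hcond⟩ := hp
    have hcond' : (p.1 : ℕ) + (p.2 : ℕ) + 2 ≤ n := hcond
    rw [Finset.mem_erase, hT, Finset.mem_filter]
    rcases eq_or_ne p.1 a with h1 | h1
    · have hp1v : (p.1 : ℕ) = i := by rw [h1]
      have hp2 : (p.2 : ℕ) ≠ m := by
        intro hh
        exact hne (Prod.ext h1 (Fin.ext hh))
      rw [h1, Equiv.swap_apply_left]
      refine ⟨?_, Finset.mem_univ _, ?_⟩
      · intro hh
        have hba : b = a := congrArg Prod.fst hh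
        have hval : (i : ℕ) + 1 = i := congrArg Fin.val hba
        omega
      · show (b : ℕ) + (p.2 : ℕ) + 2 ≤ n
        rw [hbval]
        omega
    rcases eq_or_ne p.1 b with h2 | h2
    · have hp1v : (p.1 : ℕ) = i + 1 := by rw [h2]
      rw [h2, Equiv.swap_apply_right]
      refine ⟨?_, Finset.mem_univ _, ?_⟩
      · intro hh
        have hpc : p.2 = c := congrArg Prod.snd hh
        have h3 : (p.2 : ℕ) = m := congrArg Fin.val hpc
        omega
      · show (a : ℕ) + (p.2 : ℕ) + 2 ≤ n
        rw [haval]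
        omega
    · rw [Equiv.swap_apply_of_ne_of_ne h1 h2]
      exact ⟨hne, Finset.mem_univ _, hcond⟩
  have hSx : rename (Equiv.swap (Sum.inl a : Fin n ⊕ Fin n) (Sum.inl b)) S = S := by
    have hmp : rename (⇑(Equiv.swap (Sum.inl a : Fin n ⊕ Fin n) (Sum.inl b)))
        (∏ p ∈ T.erase (a, c), (X (Sum.inl p.1) - X (Sum.inr p.2) :
          MvPolynomial (Fin n ⊕ Fin n) ℚ))
        = ∏ p ∈ T.erase (a, c), rename (⇑(Equiv.swap (Sum.inl a : Fin n ⊕ Fin n) (Sum.inl b)))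
            (X (Sum.inl p.1) - X (Sum.inr p.2)) := map_prod _ _ _
    rw [hS, hmp]
    have hterm : ∀ p ∈ T.erase (a, c),
        rename (Equiv.swap (Sum.inl a : Fin n ⊕ Fin n) (Sum.inl b))
          (X (Sum.inl p.1) - X (Sum.inr p.2))
          = (X (Sum.inl (Equiv.swap a b p.1)) - X (Sum.inr p.2) :
            MvPolynomial (Fin n ⊕ Fin n) ℚ) := by
      intro p _
      rw [map_sub, rename_X, rename_X, swap_inl_apply, swap_inl_inr]
    rw [Finset.prod_congr rfl hterm]
    apply Finset.prod_bij' (fun p _ => ((Equiv.swap a b p.1 : Fin n), p.2))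
      (fun p _ => ((Equiv.swap a b p.1 : Fin n), p.2)) hmemX hmemX
    · intro p hp
      simp [Equiv.swap_apply_self]
    · intro p hp
      simp [Equiv.swap_apply_self]
    · intro p hp
      rfl
  have hmemT : ∀ p : Fin n × Fin n, p ∈ T.erase (a, c) →
      (p.1, (Equiv.swap c d p.2 : Fin n)) ∈ T.erase (a, c) := by
    intro p hp
    rw [Finset.mem_erase, hT, Finset.mem_filter] at hp
    obtain ⟨hne, -, hcond⟩ := hp
    have hcond' : (p.1 : ℕ) + (p.2 : ℕ) + 2 ≤ n := hcond
    rw [Finset.mem_erase, hT, Finset.mem_filter]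
    rcases eq_or_ne p.2 c with h1 | h1
    · have hp2v : (p.2 : ℕ) = m := by rw [h1]
      have hp1 : (p.1 : ℕ) ≠ i := by
        intro hh
        exact hne (Prod.ext (Fin.ext hh) h1)
      rw [h1, Equiv.swap_apply_left]
      refine ⟨?_, Finset.mem_univ _, ?_⟩
      · intro hh
        have hdc : d = c := congrArg Prod.snd hh
        have hval : (m : ℕ) + 1 = m := congrArg Fin.val hdc
        omega
      · show (p.1 : ℕ) + (d : ℕ) + 2 ≤ n
        rw [hdval]
        omega
    rcases eq_or_ne p.2 d with h2 | h2
    · have hp2v : (p.2 : ℕ) = m + 1 := by rw [h2]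
      rw [h2, Equiv.swap_apply_right]
      refine ⟨?_, Finset.mem_univ _, ?_⟩
      · intro hh
        have hpa : p.1 = a := congrArg Prod.fst hh
        have h3 : (p.1 : ℕ) = i := congrArg Fin.val hpa
        omega
      · show (p.1 : ℕ) + (c : ℕ) + 2 ≤ n
        rw [hcval]
        omega
    · rw [Equiv.swap_apply_of_ne_of_ne h1 h2]
      exact ⟨hne, Finset.mem_univ _, hcond⟩
  have hSt : rename (Equiv.swap (Sum.inr c : Fin n ⊕ Fin n) (Sum.inr d)) S = S := by
    have hmp : rename (⇑(Equiv.swap (Sum.inr c : Fin n ⊕ Fin n) (Sum.inr d)))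
        (∏ p ∈ T.erase (a, c), (X (Sum.inl p.1) - X (Sum.inr p.2) :
          MvPolynomial (Fin n ⊕ Fin n) ℚ))
        = ∏ p ∈ T.erase (a, c), rename (⇑(Equiv.swap (Sum.inr c : Fin n ⊕ Fin n) (Sum.inr d)))
            (X (Sum.inl p.1) - X (Sum.inr p.2)) := map_prod _ _ _
    rw [hS, hmp]
    have hterm : ∀ p ∈ T.erase (a, c),
        rename (Equiv.swap (Sum.inr c : Fin n ⊕ Fin n) (Sum.inr d))
          (X (Sum.inl p.1) - X (Sum.inr p.2))
          = (X (Sum.inl p.1) - X (Sum.inr (Equiv.swap c d p.2)) :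
            MvPolynomial (Fin n ⊕ Fin n) ℚ) := by
      intro p _
      rw [map_sub, rename_X, rename_X, swap_inr_apply, swap_inr_inl]
    rw [Finset.prod_congr rfl hterm]
    apply Finset.prod_bij' (fun p _ => (p.1, (Equiv.swap c d p.2 : Fin n)))
      (fun p _ => (p.1, (Equiv.swap c d p.2 : Fin n))) hmemT hmemT
    · intro p hp
      simp [Equiv.swap_apply_self]
    · intro p hp
      simp [Equiv.swap_apply_self]
    · intro p hp
      rfl
  have hone : demazure (Sum.inl a : Fin n ⊕ Fin n) (Sum.inl b)
      (X (Sum.inl a) - X (Sum.inr c)) = 1 := by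
    refine demazure_unique _ _ hab' ?_
    rw [map_sub, rename_X, rename_X, Equiv.swap_apply_left, swap_inl_inr]
    ring
  have hmone : demazure (Sum.inr c : Fin n ⊕ Fin n) (Sum.inr d)
      (X (Sum.inl a) - X (Sum.inr c)) = -1 := by
    refine demazure_unique _ _ hcd' ?_
    rw [map_sub, rename_X, rename_X, swap_inr_inl, Equiv.swap_apply_left]
    ring
  rw [demAtX_eq h, demAtT_eq hm1, hfact,
    demazure_mul_invariant _ _ hab' S _ hSx,
    demazure_mul_invariant _ _ hcd' S _ hSt, hone, hmone]
  ring

lemma demWordX_schubProd {n : ℕ} (l : List ℕ) (hl : ∀ j ∈ l, j + 1 < n) :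
    demWordX n l (schubProd n)
      = ((-1 : ℚ) ^ l.length) •
          demWordT n ((l.map (fun j => n - 2 - j)).reverse) (schubProd n) := by
  induction l with
  | nil => simp [demWordX, demWordT]
  | cons i t ih =>
      have hi : i + 1 < n := hl i List.mem_cons_self
      have ht : ∀ j ∈ t, j + 1 < n := fun j hj => hl j (List.mem_cons_of_mem i hj)
      have hLrange : ∀ j ∈ (t.map (fun j => n - 2 - j)).reverse, j + 1 < n := by
        intro x hx
        rw [List.mem_reverse, List.mem_map] at hx
        obtain ⟨j, hj, rfl⟩ := hx
        have := ht j hj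
        omega
      rw [demWordX_cons]
      show demAtX n i (demWordX n t (schubProd n)) = _
      rw [ih ht, demAtX_smul hi, demAtX_demWordT_comm hi _ hLrange, schubProd_factor_key hi,
        demWordT_neg]
      have happ : demWordT n ((t.map (fun j => n - 2 - j)).reverse)
          (demAtT n (n - 2 - i) (schubProd n))
          = demWordT n ((t.map (fun j => n - 2 - j)).reverse ++ [n - 2 - i]) (schubProd n) := by
        rw [demWordT_append]
        rfl
      rw [happ]
      have hlist : (((i :: t).map (fun j => n - 2 - j)).reverse)
          = (t.map (fun j => n - 2 - j)).reverse ++ [n - 2 - i] := by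
        rw [List.map_cons, List.reverse_cons]
      rw [hlist, List.length_cons, smul_neg, ← neg_smul]
      congr 1
      rw [pow_succ]
      ring

lemma rename_sumComm_demAtX (n i : ℕ) (f : MvPolynomial (Fin n ⊕ Fin n) ℚ) :
    rename (Equiv.sumComm (Fin n) (Fin n)) (demAtX n i f)
      = demAtT n i (rename (Equiv.sumComm (Fin n) (Fin n)) f) := by
  by_cases h : i + 1 < n
  · rw [demAtX_eq h, demAtT_eq h,
      rename_demazure (Equiv.sumComm (Fin n) (Fin n)) _ _
        (by rw [Ne, Sum.inl.injEq, Fin.mk.injEq]; omega) f]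
    simp only [Equiv.sumComm_apply, Sum.swap_inl]
  · unfold demAtX demAtT
    rw [dif_neg h, dif_neg h]
    exact map_zero _

lemma rename_sumComm_demWordX (n : ℕ) (l : List ℕ) (f : MvPolynomial (Fin n ⊕ Fin n) ℚ) :
    rename (Equiv.sumComm (Fin n) (Fin n)) (demWordX n l f)
      = demWordT n l (rename (Equiv.sumComm (Fin n) (Fin n)) f) := by
  induction l with
  | nil => rfl
  | cons i t ih =>
      rw [demWordX_cons, demWordT_cons]
      show rename (Equiv.sumComm (Fin n) (Fin n)) (demAtX n i (demWordX n t f)) = _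
      rw [rename_sumComm_demAtX, ih]
      rfl

lemma rename_sumComm_schubProd (n : ℕ) :
    rename (Equiv.sumComm (Fin n) (Fin n)) (schubProd n)
      = ((-1 : ℚ) ^ (Finset.univ.filter
            (fun p : Fin n × Fin n => (p.1 : ℕ) + (p.2 : ℕ) + 2 ≤ n)).card) • schubProd n := by
  set T : Finset (Fin n × Fin n) :=
    Finset.univ.filter (fun p : Fin n × Fin n => (p.1 : ℕ) + (p.2 : ℕ) + 2 ≤ n) with hT
  have hdef : schubProd n = ∏ p ∈ T, (X (Sum.inl p.1) - X (Sum.inr p.2)) := rfl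
  have hterm : ∀ p ∈ T,
      rename (Equiv.sumComm (Fin n) (Fin n)) (X (Sum.inl p.1) - X (Sum.inr p.2))
        = (-1 : MvPolynomial (Fin n ⊕ Fin n) ℚ) * (X (Sum.inl p.2) - X (Sum.inr p.1)) := by
    intro p _
    rw [map_sub, rename_X, rename_X]
    simp only [Equiv.sumComm_apply, Sum.swap_inl, Sum.swap_inr]
    ring
  have hswap : ∏ p ∈ T, (X (Sum.inl p.2) - X (Sum.inr p.1) : MvPolynomial (Fin n ⊕ Fin n) ℚ)
      = ∏ p ∈ T, (X (Sum.inl p.1) - X (Sum.inr p.2) : MvPolynomial (Fin n ⊕ Fin n) ℚ) := by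
    apply Finset.prod_bij' (fun (p : Fin n × Fin n) _ => (p.2, p.1))
      (fun (p : Fin n × Fin n) _ => (p.2, p.1))
    · intro p hp
      rw [hT, Finset.mem_filter] at hp ⊢
      refine ⟨Finset.mem_univ _, ?_⟩
      have h2 := hp.2
      show (p.2 : ℕ) + (p.1 : ℕ) + 2 ≤ n
      omega
    · intro p hp
      rw [hT, Finset.mem_filter] at hp ⊢
      refine ⟨Finset.mem_univ _, ?_⟩
      have h2 := hp.2
      show (p.2 : ℕ) + (p.1 : ℕ) + 2 ≤ n
      omega
    · intro p hp
      rfl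
    · intro p hp
      rfl
    · intro p hp
      rfl
  have key : rename (Equiv.sumComm (Fin n) (Fin n))
        (∏ p ∈ T, (X (Sum.inl p.1) - X (Sum.inr p.2) : MvPolynomial (Fin n ⊕ Fin n) ℚ))
      = (-1 : MvPolynomial (Fin n ⊕ Fin n) ℚ) ^ T.card
          * ∏ p ∈ T, (X (Sum.inl p.1) - X (Sum.inr p.2)) := by
    have hmp : rename (⇑(Equiv.sumComm (Fin n) (Fin n)))
        (∏ p ∈ T, (X (Sum.inl p.1) - X (Sum.inr p.2) : MvPolynomial (Fin n ⊕ Fin n) ℚ))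
        = ∏ p ∈ T, rename (⇑(Equiv.sumComm (Fin n) (Fin n)))
            (X (Sum.inl p.1) - X (Sum.inr p.2)) := map_prod _ _ _
    rw [hmp, Finset.prod_congr rfl hterm, Finset.prod_mul_distrib, Finset.prod_const,
      hswap]
  rw [hdef, key, smul_eq_C_mul, map_pow, map_neg, map_one]

lemma conj_word_prod {n : ℕ} (l : List ℕ) (hl : ∀ j ∈ l, j + 1 < n) :
    (((l.map (fun j => n - 2 - j)).reverse).map (adjSwap n)).prod
      = w0 n * ((l.map (adjSwap n)).prod)⁻¹ * w0 n := by
  have h00 : ∀ x : Equiv.Perm (Fin n), w0 n * (w0 n * x) = x := by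
    intro x
    rw [← mul_assoc, w0_mul_w0, one_mul]
  induction l with
  | nil =>
      simp only [List.map_nil, List.reverse_nil, List.prod_nil, inv_one, mul_one]
      rw [w0_mul_w0]
  | cons j t ih =>
      have hj : j + 1 < n := hl j List.mem_cons_self
      have ht : ∀ x ∈ t, x + 1 < n := fun x hx => hl x (List.mem_cons_of_mem j hx)
      rw [List.map_cons, List.reverse_cons, List.map_append, List.prod_append,
        ih ht, List.map_cons, List.map_nil, List.prod_cons, List.prod_nil, mul_one,
        ← w0_conj_adjSwap hj, List.map_cons, List.prod_cons, mul_inv_rev, adjSwap_inv]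
      simp only [mul_assoc]
      rw [h00]

end Transfer
/-- **Antipode identity.**  `𝔖_w(x,t) - (-1)^{ℓ(w)} 𝔖_{w⁻¹}(t,x)` lies in the ideal
generated by the differences `p(x) - p(t)` for symmetric polynomials `p`. -/
theorem schubert_antipode (n : ℕ) (hn : 1 ≤ n) (w : Equiv.Perm (Fin n)) :
    schubert n w -
        ((-1 : ℚ) ^ permLen w) • rename (Equiv.sumComm (Fin n) (Fin n)) (schubert n w⁻¹) ∈
      Ideal.span {q : MvPolynomial (Fin n ⊕ Fin n) ℚ |
        ∃ p : MvPolynomial (Fin n) ℚ, p.IsSymmetric ∧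
          q = rename Sum.inl p - rename Sum.inr p} := by
  set N : ℕ := (Finset.univ.filter
      (fun p : Fin n × Fin n => (p.1 : ℕ) + (p.2 : ℕ) + 2 ≤ n)).card with hN
  have hNpairs : (Finset.univ.filter (fun p : Fin n × Fin n => p.1 < p.2)).card = N :=
    card_pairs_eq_card_schubSet n
  have hexu := exists_reducedWord n (w⁻¹ * w0 n)
  have hexv := exists_reducedWord n (w * w0 n)
  obtain ⟨hurange, huprod, hulen⟩ := hexu.choose_spec
  obtain ⟨hvrange, hvprod, hvlen⟩ := hexv.choose_spec
  have hs1 : schubert n w = demWordX n hexu.choose (schubProd n) := by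
    unfold schubert demazureOfX
    rw [dif_pos hexu]
  have hvv : w⁻¹⁻¹ * w0 n = w * w0 n := by rw [inv_inv]
  have hs2 : schubert n w⁻¹ = demWordX n hexv.choose (schubProd n) := by
    unfold schubert
    rw [hvv]
    unfold demazureOfX
    rw [dif_pos hexv]
  have hLu : permLen (w⁻¹ * w0 n) + permLen w = N := by
    have h1 := permLen_mul_w0_add (v := w⁻¹)
    rw [permLen_inv] at h1
    omega
  have hLv : permLen (w * w0 n) + permLen w = N := by
    have h1 := permLen_mul_w0_add (v := w)
    omega
  have hred : IsReducedWord n (w * w0 n)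
      ((hexu.choose.map (fun j => n - 2 - j)).reverse) := by
    refine ⟨?_, ?_, ?_⟩
    · intro x hx
      rw [List.mem_reverse, List.mem_map] at hx
      obtain ⟨j, hj, rfl⟩ := hx
      have := hurange j hj
      omega
    · rw [conj_word_prod _ hurange, huprod, mul_inv_rev,
        inv_eq_of_mul_eq_one_right (w0_mul_w0 n), inv_inv, ← mul_assoc, w0_mul_w0, one_mul]
    · rw [List.length_reverse, List.length_map, hulen]
      omega
  have hwd : demWordT n ((hexu.choose.map (fun j => n - 2 - j)).reverse)
      = demWordT n hexv.choose :=
    demWordT_welldef (w * w0 n) _ _ hred ⟨hvrange, hvprod, hvlen⟩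
  have htr := demWordX_schubProd hexu.choose hurange
  have hren : rename (Equiv.sumComm (Fin n) (Fin n)) (schubert n w⁻¹)
      = ((-1 : ℚ) ^ N) • demWordT n hexv.choose (schubProd n) := by
    rw [hs2, rename_sumComm_demWordX, rename_sumComm_schubProd, ← hN, demWordT_smul]
  have hpow : ((-1 : ℚ)) ^ hexu.choose.length = (-1 : ℚ) ^ (permLen w + N) := by
    have h2N : hexu.choose.length + (permLen w + N) = 2 * N := by omega
    have h1 : ((-1 : ℚ)) ^ (hexu.choose.length + (permLen w + N)) = 1 := by
      rw [h2N, pow_mul]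
      norm_num
    rw [pow_add] at h1
    have h2 : ((-1 : ℚ) ^ (permLen w + N)) * ((-1 : ℚ) ^ (permLen w + N)) = 1 := by
      rw [← pow_add, show (permLen w + N) + (permLen w + N) = 2 * (permLen w + N) by omega,
        pow_mul]
      norm_num
    calc (-1 : ℚ) ^ hexu.choose.length
        = (-1 : ℚ) ^ hexu.choose.length * ((-1 : ℚ) ^ (permLen w + N)
            * (-1 : ℚ) ^ (permLen w + N)) := by rw [h2, mul_one]
      _ = ((-1 : ℚ) ^ hexu.choose.length * (-1 : ℚ) ^ (permLen w + N))
            * (-1 : ℚ) ^ (permLen w + N) := by ring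
      _ = (-1 : ℚ) ^ (permLen w + N) := by rw [h1, one_mul]
  have hfinal : schubert n w -
      ((-1 : ℚ) ^ permLen w) • rename (Equiv.sumComm (Fin n) (Fin n)) (schubert n w⁻¹)
      = 0 := by
    rw [hs1, htr, hwd, hren, smul_smul, hpow, ← pow_add, sub_self]
  rw [hfinal]
  exact Submodule.zero_mem _
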